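/- Let P_1 = x_0 x_1 … x_p and P_2 = y_0 y_1 … y_q be vertex-disjoint paths of a graph G (possibly with chords) such that for every 0 ≤ i < p and 0 ≤ j < q, the four vertices {x_i, x_{i+1}, y_j, y_{j+1}} form the vertex set of an alternating cycle of G. Then every unweighted leaf root of G contains the quartet x_0 x_p | y_0 y_q. -/

import Mathlib

open SimpleGraph

namespace LeafPaper

/-- A leaf of a graph: a vertex with exactly one neighbor. -/
def IsLeaf {W : Type} (T : SimpleGraph W) (w : W) : Prop := ∃! u, T.Adj w u

/-- The edge list of the (unique, if `T` is a tree) path between `x` and `y`. -/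
noncomputable def treePathEdges {W : Type} (T : SimpleGraph W) (x y : W) :
    List (Sym2 W) := by
  classical
  exact if h : T.Reachable x y then (Classical.choice h).bypass.edges else []

/-- The weighted distance between `x` and `y` in a tree `T` with edge weighting `f`:
the sum of the weights of the edges on the (unique) path between `x` and `y`. -/
noncomputable def wdist {W : Type} (T : SimpleGraph W) (f : Sym2 W → ℕ) (x y : W) : ℕ :=
  ((treePathEdges T x y).map f).sum

/-- `(T, f)` is a leaf root of `G` with threshold `k`, where `ι` identifies the
vertices of `G` with the leaves of `T`. -/
def IsLeafRoot {V W : Type} (G : SimpleGraph V) (T : SimpleGraph W) (ι : V → W)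
    (f : Sym2 W → ℕ) (k : ℕ) : Prop :=
  T.IsTree ∧ Function.Injective ι ∧ (∀ w : W, IsLeaf T w ↔ w ∈ Set.range ι) ∧
    (∀ e ∈ T.edgeSet, 0 < f e) ∧
    ∀ u v : V, u ≠ v → (G.Adj u v ↔ wdist T f (ι u) (ι v) ≤ k)

/-- An unweighted tree `T` is an unweighted leaf root of `G` if some positive
integer weighting of its edges makes it a leaf root of `G`. -/
def IsUnweightedLeafRoot {V W : Type} (G : SimpleGraph V) (T : SimpleGraph W)
    (ι : V → W) : Prop :=
  ∃ (f : Sym2 W → ℕ) (k : ℕ), IsLeafRoot G T ι f k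

/-- `G` is a leaf power: there are a finite tree `T` whose leaf set is exactly `V(G)`
and a positive threshold `k` such that distinct vertices are adjacent in `G` iff their
tree distance is at most `k`. -/
def IsLeafPower {V : Type} (G : SimpleGraph V) : Prop :=
  ∃ (W : Type) (T : SimpleGraph W) (ι : V → W) (k : ℕ),
    Finite W ∧ T.IsTree ∧ Function.Injective ι ∧
      (∀ w : W, IsLeaf T w ↔ w ∈ Set.range ι) ∧ 0 < k ∧
      ∀ u v : V, u ≠ v → (G.Adj u v ↔ T.dist (ι u) (ι v) ≤ k)

/-- An alternating cycle `(x 0, y 0, x 1, y 1, …)` of `G`: `2c` distinct vertices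
such that `x i y i` is an edge and `y i x (i+1)` is a non-edge (indices mod `c`). -/
def IsAltCycle {V : Type} (G : SimpleGraph V) (c : ℕ) (x y : ZMod c → V) : Prop :=
  2 ≤ c ∧ Function.Injective (Sum.elim x y) ∧
    ∀ i : ZMod c, G.Adj (x i) (y i) ∧ ¬ G.Adj (y i) (x (i + 1))

/-- The weighted tree `(T, f)` satisfies the alternating cycle given by `x, y`
with threshold `k`. -/
def Satisfies {V W : Type} (T : SimpleGraph W) (f : Sym2 W → ℕ) (ι : V → W)
    (c : ℕ) (x y : ZMod c → V) (k : ℕ) : Prop :=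
  ∀ i : ZMod c, wdist T f (ι (x i)) (ι (y i)) ≤ k ∧
    k < wdist T f (ι (y i)) (ι (x (i + 1)))

/-- The unweighted tree `T` can satisfy the alternating cycle given by `x, y`. -/
def CanSatisfy {V W : Type} (T : SimpleGraph W) (ι : V → W) (c : ℕ)
    (x y : ZMod c → V) : Prop :=
  ∃ (f : Sym2 W → ℕ) (k : ℕ), (∀ e ∈ T.edgeSet, 0 < f e) ∧ Satisfies T f ι c x y k

/-- `T` contains the quartet `ab|cd`: the four vertices are distinct leaves of `T` and
the path between `a` and `b` is vertex-disjoint from the path between `c` and `d`. -/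
def ContainsQuartet {W : Type} (T : SimpleGraph W) (a b c d : W) : Prop :=
  IsLeaf T a ∧ IsLeaf T b ∧ IsLeaf T c ∧ IsLeaf T d ∧ a ≠ b ∧ c ≠ d ∧
    ∀ (p : T.Walk a b) (p' : T.Walk c d), p.IsPath → p'.IsPath →
      ∀ w : W, w ∈ p.support → w ∉ p'.support


section Aux
variable {W : Type} {T : SimpleGraph W} {f : Sym2 W → ℕ}

lemma sum_toFinset_le {α : Type*} [DecidableEq α] (f : α → ℕ) :
    ∀ l : List α, l.toFinset.sum f ≤ (l.map f).sum := by
  intro l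
  induction l with
  | nil => simp
  | cons a l ih =>
    simp only [List.toFinset_cons, List.map_cons, List.sum_cons]
    by_cases h : a ∈ l.toFinset
    · rw [Finset.insert_eq_self.2 h]
      exact le_trans ih (Nat.le_add_left _ _)
    · rw [Finset.sum_insert h]
      exact Nat.add_le_add_left ih _

lemma sum_le_of_subset {α : Type*} [DecidableEq α] {l1 l2 : List α}
    (h1 : l1.Nodup) (h : l1 ⊆ l2) (f : α → ℕ) :
    (l1.map f).sum ≤ (l2.map f).sum := by
  rw [← List.sum_toFinset f h1]
  exact le_trans (Finset.sum_le_sum_of_subset (by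
    intro e he; simp only [List.mem_toFinset] at he ⊢; exact h he))
    (sum_toFinset_le f l2)

lemma exists_rep (htree : T.IsTree) (a b : W) :
    ∃ P : T.Walk a b, P.IsPath ∧ treePathEdges T a b = P.edges := by
  have h : T.Reachable a b := htree.isConnected.preconnected a b
  unfold treePathEdges
  rw [dif_pos h]
  classical
  exact ⟨_, Walk.bypass_isPath _, rfl⟩

lemma wdist_eq (htree : T.IsTree) {a b : W} (P : T.Walk a b) (hP : P.IsPath) :
    wdist T f a b = (P.edges.map f).sum := by
  obtain ⟨Q, hQ, he⟩ := exists_rep htree a b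
  rw [wdist, he, (htree.existsUnique_path a b).unique hQ hP]

lemma wdist_symm (htree : T.IsTree) (a b : W) : wdist T f a b = wdist T f b a := by
  obtain ⟨P, hP, _⟩ := exists_rep htree a b
  rw [wdist_eq htree P hP, wdist_eq htree P.reverse hP.reverse, Walk.edges_reverse,
    List.map_reverse, List.sum_reverse]

lemma wdist_triangle (htree : T.IsTree) (a b c : W) :
    wdist T f a c ≤ wdist T f a b + wdist T f b c := by
  classical
  obtain ⟨P1, hP1, _⟩ := exists_rep htree a b
  obtain ⟨P2, hP2, _⟩ := exists_rep htree b c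
  rw [wdist_eq htree P1 hP1, wdist_eq htree P2 hP2,
    wdist_eq htree (P1.append P2).bypass (Walk.bypass_isPath _)]
  calc ((P1.append P2).bypass.edges.map f).sum
      ≤ ((P1.append P2).edges.map f).sum :=
        sum_le_of_subset (Walk.bypass_isPath _).isTrail.edges_nodup
          (Walk.edges_bypass_subset _) f
    _ = _ := by rw [Walk.edges_append, List.map_append, List.sum_append]

lemma wdist_split (htree : T.IsTree) {a b m : W} (P : T.Walk a b) (hP : P.IsPath)
    (hm : m ∈ P.support) :
    wdist T f a m + wdist T f m b = wdist T f a b := by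
  classical
  have he : P.edges = (P.takeUntil m hm).edges ++ (P.dropUntil m hm).edges := by
    conv_lhs => rw [← Walk.take_spec P hm]
    rw [Walk.edges_append]
  rw [wdist_eq htree P hP, wdist_eq htree _ (hP.takeUntil hm),
    wdist_eq htree _ (hP.dropUntil hm), he, List.map_append, List.sum_append]

lemma chain (htree : T.IsTree) (z : ℕ → W) :
    ∀ n, 1 ≤ n → ∀ (Q : T.Walk (z 0) (z n)), Q.IsPath → ∀ w ∈ Q.support,
      ∃ i, i < n ∧ ∃ (R : T.Walk (z i) (z (i + 1))), R.IsPath ∧ w ∈ R.support := by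
  classical
  intro n hn
  induction n, hn using Nat.le_induction with
  | base => exact fun Q hQ w hw => ⟨0, Nat.zero_lt_one, Q, hQ, hw⟩
  | succ n hn ih =>
    intro Q hQ w hw
    obtain ⟨P1, hP1, _⟩ := exists_rep htree (z 0) (z n)
    obtain ⟨P2, hP2, _⟩ := exists_rep htree (z n) (z (n + 1))
    have hQeq : Q = (P1.append P2).bypass :=
      (htree.existsUnique_path _ _).unique hQ (Walk.bypass_isPath _)
    rw [hQeq] at hw
    have := Walk.support_bypass_subset _ hw
    rw [Walk.mem_support_append_iff] at this
    rcases this with h | h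
    · obtain ⟨i, hi, R, hR, hwR⟩ := ih P1 hP1 w h
      exact ⟨i, by omega, R, hR, hwR⟩
    · exact ⟨n, by omega, P2, hP2, h⟩

lemma cross {V : Type} (G : SimpleGraph V) {a b c d α β γ δ : V}
    (hab : G.Adj a b) (hcd : G.Adj c d)
    (mα : α = a ∨ α = b ∨ α = c ∨ α = d) (mβ : β = a ∨ β = b ∨ β = c ∨ β = d)
    (mγ : γ = a ∨ γ = b ∨ γ = c ∨ γ = d) (mδ : δ = a ∨ δ = b ∨ δ = c ∨ δ = d)
    (dαβ : α ≠ β) (dαγ : α ≠ γ) (dαδ : α ≠ δ) (dβγ : β ≠ γ) (dβδ : β ≠ δ) (dγδ : γ ≠ δ)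
    (n1 : ¬ G.Adj α β) (n2 : ¬ G.Adj γ δ) :
    (¬ G.Adj a c ∧ ¬ G.Adj b d) ∨ (¬ G.Adj a d ∧ ¬ G.Adj b c) := by
  have hba := hab.symm; have hdc := hcd.symm
  have n1' : ¬ G.Adj β α := fun h => n1 h.symm
  have n2' : ¬ G.Adj δ γ := fun h => n2 h.symm
  rcases mα with rfl|rfl|rfl|rfl <;> rcases mβ with rfl|rfl|rfl|rfl <;>
    rcases mγ with rfl|rfl|rfl|rfl <;> rcases mδ with rfl|rfl|rfl|rfl <;> tauto

end Aux

lemma core {V W : Type} {G : SimpleGraph V} {T : SimpleGraph W} (htree : T.IsTree)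
    {f : Sym2 W → ℕ} {ι : V → W} {k : ℕ}
    (hiff : ∀ u v : V, u ≠ v → (G.Adj u v ↔ wdist T f (ι u) (ι v) ≤ k))
    {a b c d : V} (hab : G.Adj a b) (hcd : G.Adj c d)
    (hac : a ≠ c) (had : a ≠ d) (hbc : b ≠ c) (hbd : b ≠ d)
    (hcross : (¬ G.Adj a c ∧ ¬ G.Adj b d) ∨ (¬ G.Adj a d ∧ ¬ G.Adj b c))
    {w : W} (Ra : T.Walk (ι a) (ι b)) (hRa : Ra.IsPath) (hwa : w ∈ Ra.support)
    (Rc : T.Walk (ι c) (ι d)) (hRc : Rc.IsPath) (hwc : w ∈ Rc.support) : False := by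
  have hA := wdist_split (f := f) htree Ra hRa hwa
  have hC := wdist_split (f := f) htree Rc hRc hwc
  have dab : wdist T f (ι a) (ι b) ≤ k := (hiff a b hab.ne).1 hab
  have dcd : wdist T f (ι c) (ι d) ≤ k := (hiff c d hcd.ne).1 hcd
  have s1 := wdist_symm (f := f) htree w (ι c)
  have s2 := wdist_symm (f := f) htree w (ι d)
  have s3 := wdist_symm (f := f) htree (ι b) w
  have t1 := wdist_triangle (f := f) htree (ι a) w (ι c)
  have t2 := wdist_triangle (f := f) htree (ι a) w (ι d)
  have t3 := wdist_triangle (f := f) htree (ι b) w (ι c)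
  have t4 := wdist_triangle (f := f) htree (ι b) w (ι d)
  rcases hcross with ⟨n1, n2⟩ | ⟨n1, n2⟩
  · have k1 : k < wdist T f (ι a) (ι c) := not_le.mp (fun h => n1 ((hiff a c hac).2 h))
    have k2 : k < wdist T f (ι b) (ι d) := not_le.mp (fun h => n2 ((hiff b d hbd).2 h))
    omega
  · have k1 : k < wdist T f (ι a) (ι d) := not_le.mp (fun h => n1 ((hiff a d had).2 h))
    have k2 : k < wdist T f (ι b) (ι c) := not_le.mp (fun h => n2 ((hiff b c hbc).2 h))
    omega

lemma chain_fin {W : Type} {T : SimpleGraph W} (htree : T.IsTree) {V : Type} (ι : V → W)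
    (p : ℕ) (hp : 1 ≤ p) (x : Fin (p + 1) → V)
    (P : T.Walk (ι (x 0)) (ι (x (Fin.last p)))) (hP : P.IsPath) (w : W) (hw : w ∈ P.support) :
    ∃ (i : ℕ) (hi : i < p) (R : T.Walk (ι (x ⟨i, by omega⟩)) (ι (x ⟨i + 1, by omega⟩))),
      R.IsPath ∧ w ∈ R.support := by
  classical
  have h0 : ι (x 0) = ι (x ⟨min 0 p, Nat.lt_succ_of_le (min_le_right 0 p)⟩) :=
    congrArg ι (congrArg x (Fin.ext (by simp)))
  have hl : ι (x (Fin.last p)) = ι (x ⟨min p p, Nat.lt_succ_of_le (min_le_right p p)⟩) :=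
    congrArg ι (congrArg x (Fin.ext (by simp)))
  obtain ⟨i, hi, R, hR, hwR⟩ :=
    chain htree (fun n => ι (x ⟨min n p, Nat.lt_succ_of_le (min_le_right n p)⟩)) p hp
      (P.copy h0 hl) ((Walk.isPath_copy _ _ _).2 hP) w (by rwa [Walk.support_copy])
  have e1 : ι (x ⟨min i p, Nat.lt_succ_of_le (min_le_right i p)⟩) = ι (x ⟨i, by omega⟩) :=
    congrArg ι (congrArg x (Fin.ext (Nat.min_eq_left hi.le)))
  have e2 : ι (x ⟨min (i + 1) p, Nat.lt_succ_of_le (min_le_right (i + 1) p)⟩) =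
      ι (x ⟨i + 1, by omega⟩) :=
    congrArg ι (congrArg x (Fin.ext (Nat.min_eq_left hi)))
  exact ⟨i, hi, R.copy e1 e2, (Walk.isPath_copy _ _ _).2 hR, by rwa [Walk.support_copy]⟩


/-- let `P₁ = x₀…x_p` and `P₂ = y₀…y_q` be vertex-disjoint paths of `G`
(possibly with chords) such that for all `i < p`, `j < q` the four vertices
`{x i, x (i+1), y j, y (j+1)}` form the vertex set of an alternating cycle of `G`.
Then every unweighted leaf root of `G` contains the quartet `x₀ x_p | y₀ y_q`. -/
theorem stmt_7 {V : Type} [Fintype V] (G : SimpleGraph V) (p q : ℕ)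
    (hp : 1 ≤ p) (hq : 1 ≤ q)
    (x : Fin (p + 1) → V) (y : Fin (q + 1) → V)
    (hx : Function.Injective x) (hy : Function.Injective y)
    (hxpath : ∀ i : Fin p, G.Adj (x i.castSucc) (x i.succ))
    (hypath : ∀ j : Fin q, G.Adj (y j.castSucc) (y j.succ))
    (hdisj : ∀ (i : Fin (p + 1)) (j : Fin (q + 1)), x i ≠ y j)
    (hcyc : ∀ (i : Fin p) (j : Fin q), ∃ u w : ZMod 2 → V,
      IsAltCycle G 2 u w ∧
        ({u 0, w 0, u 1, w 1} : Set V) =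
          {x i.castSucc, x i.succ, y j.castSucc, y j.succ}) :
    ∀ {W : Type} (T : SimpleGraph W) (ι : V → W), IsUnweightedLeafRoot G T ι →
      ContainsQuartet T (ι (x 0)) (ι (x (Fin.last p))) (ι (y 0)) (ι (y (Fin.last q))) := by
  intro W T ι hroot
  obtain ⟨f, k, htree, hinj, hleaf, hfpos, hiff⟩ := hroot
  refine ⟨(hleaf _).mpr ⟨_, rfl⟩, (hleaf _).mpr ⟨_, rfl⟩, (hleaf _).mpr ⟨_, rfl⟩,
    (hleaf _).mpr ⟨_, rfl⟩, ?_, ?_, ?_⟩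
  · intro h
    have h2 := congrArg Fin.val (hx (hinj h))
    simp at h2
    omega
  · intro h
    have h2 := congrArg Fin.val (hy (hinj h))
    simp at h2
    omega
  · intro P P' hP hP' w hw hw'
    obtain ⟨i, hi, Ra, hRa, hwa⟩ := chain_fin htree ι p hp x P hP w hw
    obtain ⟨j, hj, Rc, hRc, hwc⟩ := chain_fin htree ι q hq y P' hP' w hw'
    exact absurd hw' (fun _ => by
      clear hw hw'
      have hab : G.Adj (x ((⟨i, hi⟩ : Fin p).castSucc)) (x ((⟨i, hi⟩ : Fin p).succ)) :=
        hxpath ⟨i, hi⟩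
      have hcd : G.Adj (y ((⟨j, hj⟩ : Fin q).castSucc)) (y ((⟨j, hj⟩ : Fin q).succ)) :=
        hypath ⟨j, hj⟩
      obtain ⟨u, v, ⟨-, hinj', hmem⟩, hset⟩ := hcyc ⟨i, hi⟩ ⟨j, hj⟩
      have d01 : (0 : ZMod 2) ≠ 1 := by decide
      have duv : ∀ s t : ZMod 2, u s ≠ v t := fun s t h => by
        have h2 := hinj' (show Sum.elim u v (Sum.inl s) = Sum.elim u v (Sum.inr t) from h)
        simp at h2
      have du01 : u 0 ≠ u 1 := fun h => d01 (Sum.inl.inj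
        (hinj' (show Sum.elim u v (Sum.inl 0) = Sum.elim u v (Sum.inl 1) from h)))
      have dv01 : v 0 ≠ v 1 := fun h => d01 (Sum.inr.inj
        (hinj' (show Sum.elim u v (Sum.inr 0) = Sum.elim u v (Sum.inr 1) from h)))
      have n1 : ¬ G.Adj (v 0) (u 1) := by
        have h2 := (hmem 0).2
        rwa [zero_add] at h2
      have n2 : ¬ G.Adj (v 1) (u 0) := by
        have h2 := (hmem 1).2
        rwa [(by decide : (1 : ZMod 2) + 1 = 0)] at h2
      have mem : ∀ t : V, t ∈ ({u 0, v 0, u 1, v 1} : Set V) →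
          (t = x ((⟨i, hi⟩ : Fin p).castSucc) ∨ t = x ((⟨i, hi⟩ : Fin p).succ) ∨
            t = y ((⟨j, hj⟩ : Fin q).castSucc) ∨ t = y ((⟨j, hj⟩ : Fin q).succ)) := by
        intro t ht
        rw [hset] at ht
        simpa using ht
      have hcross := cross G hab hcd
        (mem (v 0) (by simp)) (mem (u 1) (by simp)) (mem (v 1) (by simp)) (mem (u 0) (by simp))
        (fun h => duv 1 0 h.symm) dv01 (fun h => duv 0 0 h.symm)
        (duv 1 1) (Ne.symm du01) (duv 0 1 ∘ Eq.symm)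
        n1 n2
      exact core htree hiff hab hcd (hdisj _ _) (hdisj _ _) (hdisj _ _) (hdisj _ _) hcross
        Ra hRa hwa Rc hRc hwc)

end LeafPaper
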